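/- Rod lemma: Let R ⊆ ℝ² and let c : ℝ² → Fin 2 be a coloring such that any two points of R at distance 1 get distinct colors. Suppose γ, δ : [0,1] → interior(R) are continuous paths with ‖γ(t) - δ(t)‖ = 1 for all t (a continuously sliding rod). Then c(γ(0)) = c(γ(1)), i.e., each endpoint of the rod sweeps out a monochromatic set. -/

import Mathlib

private lemma eq_one_of_sq_eq_one {x : ℝ} (h0 : 0 ≤ x) (h : x^2 = 1) : x = 1 := by
  have hz : (x - 1) * (x + 1) = 0 := by nlinarith
  rcases mul_eq_zero.mp hz with h' | h' <;> linarith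

private lemma fin2_trans (x y z : Fin 2) (h1 : x ≠ y) (h2 : y ≠ z) : x = z := by
  revert x y z; decide

set_option maxHeartbeats 1600000 in
private lemma four_units (w : ℂ) (ht : ‖w‖ ≤ 1/2) :
    ∃ z1 z2 z3 z4 : ℂ, ‖z1‖ = 1 ∧ ‖z2‖ = 1 ∧ ‖z3‖ = 1 ∧ ‖z4‖ = 1 ∧
      z1 - z2 + z3 - z4 = w ∧
      ‖z1 - 1‖ ≤ Real.sqrt (2*‖w‖) + 2*‖w‖ ∧ ‖z2 - 1‖ ≤ Real.sqrt (2*‖w‖) + 2*‖w‖ ∧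
      ‖z3 - 1‖ ≤ Real.sqrt (2*‖w‖) + 2*‖w‖ ∧ ‖z4 - 1‖ ≤ Real.sqrt (2*‖w‖) + 2*‖w‖ := by
  set t := ‖w‖ with htdef
  have ht0 : 0 ≤ t := norm_nonneg w
  have hwsq : w.re^2 + w.im^2 = t^2 := by
    have := Complex.sq_norm w
    rw [Complex.normSq_apply] at this
    nlinarith [this]
  have hwre : w.re ≤ t := by
    rw [htdef]; exact Complex.re_le_norm w
  -- z2 and z4
  set s2 : ℝ := Real.sqrt (t - t^2/4) with hs2def
  have hs2sq : s2^2 = t - t^2/4 := Real.sq_sqrt (by nlinarith)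
  set z2 : ℂ := ⟨1 - t/2, s2⟩ with hz2def
  set z4 : ℂ := ⟨1 - t/2, -s2⟩ with hz4def
  have hz2n : ‖z2‖ = 1 := by
    apply eq_one_of_sq_eq_one (norm_nonneg _)
    rw [Complex.sq_norm, hz2def, Complex.normSq_mk]
    nlinarith
  have hz4n : ‖z4‖ = 1 := by
    apply eq_one_of_sq_eq_one (norm_nonneg _)
    rw [Complex.sq_norm, hz4def, Complex.normSq_mk]
    nlinarith
  have hz24 : z2 + z4 = ((2 - t : ℝ) : ℂ) := by
    apply Complex.ext <;> simp [hz2def, hz4def] <;> ring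
  have hz2b : ‖z2 - 1‖ ≤ Real.sqrt (2*t) := by
    rw [Real.le_sqrt (norm_nonneg _) (by positivity)]
    rw [Complex.sq_norm]
    have : z2 - 1 = ⟨-t/2, s2⟩ := by apply Complex.ext <;> simp [hz2def] <;> ring
    rw [this, Complex.normSq_mk]
    nlinarith
  have hz4b : ‖z4 - 1‖ ≤ Real.sqrt (2*t) := by
    rw [Real.le_sqrt (norm_nonneg _) (by positivity)]
    rw [Complex.sq_norm]
    have : z4 - 1 = ⟨-t/2, -s2⟩ := by apply Complex.ext <;> simp [hz4def] <;> ring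
    rw [this, Complex.normSq_mk]
    nlinarith
  -- A
  set A : ℂ := ((2 - t : ℝ) : ℂ) + w with hAdef
  have hnormr : ‖((2 - t : ℝ) : ℂ)‖ = 2 - t := by
    rw [Complex.norm_real, Real.norm_eq_abs, abs_of_nonneg (by linarith)]
  have hAle : ‖A‖ ≤ 2 := by
    have h1 : ‖A‖^2 = ((2-t) + w.re)^2 + w.im^2 := by
      rw [Complex.sq_norm, hAdef, Complex.normSq_apply]
      simp [Complex.add_re, Complex.add_im, Complex.ofReal_re, Complex.ofReal_im]
      ring
    nlinarith [norm_nonneg A, sq_nonneg (‖A‖ + 2)]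
  have hAge : 2 - 2*t ≤ ‖A‖ := by
    have h1 : ‖((2 - t : ℝ) : ℂ)‖ ≤ ‖A‖ + ‖w‖ := by
      calc ‖((2 - t : ℝ) : ℂ)‖ = ‖A - w‖ := by rw [hAdef]; ring_nf
        _ ≤ ‖A‖ + ‖w‖ := norm_sub_le _ _
    rw [hnormr] at h1; linarith
  have hAge1 : 1 ≤ ‖A‖ := by linarith
  have hApos : (0:ℝ) < ‖A‖ := by linarith
  have hAne : (‖A‖ : ℂ) ≠ 0 := by
    simp only [ne_eq, Complex.ofReal_eq_zero]; linarith
  -- v, e, z1, z3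
  set nA := ‖A‖ with hnAdef
  set sv : ℝ := Real.sqrt (1 - nA^2/4) with hsvdef
  have hsvsq : sv^2 = 1 - nA^2/4 := Real.sq_sqrt (by nlinarith)
  set v : ℂ := ⟨nA/2, sv⟩ with hvdef
  set vb : ℂ := ⟨nA/2, -sv⟩ with hvbdef
  have hvn : ‖v‖ = 1 := by
    apply eq_one_of_sq_eq_one (norm_nonneg _)
    rw [Complex.sq_norm, hvdef, Complex.normSq_mk]
    nlinarith
  have hvbn : ‖vb‖ = 1 := by
    apply eq_one_of_sq_eq_one (norm_nonneg _)
    rw [Complex.sq_norm, hvbdef, Complex.normSq_mk]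
    nlinarith
  set e : ℂ := A / (nA : ℂ) with hedef
  have hen : ‖e‖ = 1 := by
    rw [hedef, norm_div, Complex.norm_real, Real.norm_eq_abs, abs_of_pos hApos, ← hnAdef]
    exact div_self (ne_of_gt hApos)
  set z1 : ℂ := e * v with hz1def
  set z3 : ℂ := e * vb with hz3def
  have hz1n : ‖z1‖ = 1 := by rw [hz1def, norm_mul, hen, hvn, one_mul]
  have hz3n : ‖z3‖ = 1 := by rw [hz3def, norm_mul, hen, hvbn, one_mul]
  have hvvb : v + vb = ((nA : ℝ) : ℂ) := by
    apply Complex.ext <;> simp [hvdef, hvbdef] <;> ring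
  have hz13 : z1 + z3 = A := by
    rw [hz1def, hz3def, ← mul_add, hvvb, hedef]
    field_simp
  have hsum : z1 - z2 + z3 - z4 = w := by
    have : z1 - z2 + z3 - z4 = (z1 + z3) - (z2 + z4) := by ring
    rw [this, hz13, hz24, hAdef]; ring
  -- bounds for z1, z3
  have hvb1 : ‖v - 1‖ ≤ Real.sqrt (2*t) := by
    rw [Real.le_sqrt (norm_nonneg _) (by positivity)]
    rw [Complex.sq_norm]
    have : v - 1 = ⟨nA/2 - 1, sv⟩ := by apply Complex.ext <;> simp [hvdef]
    rw [this, Complex.normSq_mk]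
    nlinarith
  have hvbb1 : ‖vb - 1‖ ≤ Real.sqrt (2*t) := by
    rw [Real.le_sqrt (norm_nonneg _) (by positivity)]
    rw [Complex.sq_norm]
    have : vb - 1 = ⟨nA/2 - 1, -sv⟩ := by apply Complex.ext <;> simp [hvbdef]
    rw [this, Complex.normSq_mk]
    nlinarith
  have heb : ‖e - 1‖ ≤ 2*t := by
    have h1 : e - 1 = (A - (nA:ℂ)) / (nA : ℂ) := by
      rw [hedef]; field_simp
    have h2 : ‖A - (nA:ℂ)‖ ≤ 2*t := by
      calc ‖A - (nA:ℂ)‖ ≤ ‖A - ((2 - t : ℝ) : ℂ)‖ + ‖((2 - t : ℝ) : ℂ) - (nA:ℂ)‖ := by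
            have : A - (nA:ℂ) = (A - ((2 - t : ℝ) : ℂ)) + (((2 - t : ℝ) : ℂ) - (nA:ℂ)) := by ring
            rw [this]; exact norm_add_le _ _
        _ ≤ t + t := by
            gcongr
            · have : A - ((2 - t : ℝ) : ℂ) = w := by rw [hAdef]; ring
              rw [this]
            · rw [← Complex.ofReal_sub, Complex.norm_real, Real.norm_eq_abs]
              rw [abs_le]; constructor <;> [skip; skip] <;> nlinarith
        _ = 2*t := by ring
    rw [h1, norm_div, Complex.norm_real, Real.norm_eq_abs, abs_of_pos hApos]
    calc ‖A - (nA:ℂ)‖ / nA ≤ ‖A - (nA:ℂ)‖ / 1 := by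
          apply div_le_div_of_nonneg_left (norm_nonneg _) one_pos hAge1
      _ = ‖A - (nA:ℂ)‖ := div_one _
      _ ≤ 2*t := h2
  have hz1b : ‖z1 - 1‖ ≤ Real.sqrt (2*t) + 2*t := by
    calc ‖z1 - 1‖ = ‖e * (v - 1) + (e - 1)‖ := by rw [hz1def]; ring_nf
      _ ≤ ‖e * (v - 1)‖ + ‖e - 1‖ := norm_add_le _ _
      _ = ‖v - 1‖ + ‖e - 1‖ := by rw [norm_mul, hen, one_mul]
      _ ≤ Real.sqrt (2*t) + 2*t := add_le_add hvb1 heb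
  have hz3b : ‖z3 - 1‖ ≤ Real.sqrt (2*t) + 2*t := by
    calc ‖z3 - 1‖ = ‖e * (vb - 1) + (e - 1)‖ := by rw [hz3def]; ring_nf
      _ ≤ ‖e * (vb - 1)‖ + ‖e - 1‖ := norm_add_le _ _
      _ = ‖vb - 1‖ + ‖e - 1‖ := by rw [norm_mul, hen, one_mul]
      _ ≤ Real.sqrt (2*t) + 2*t := add_le_add hvbb1 heb
  exact ⟨z1, z2, z3, z4, hz1n, hz2n, hz3n, hz4n, hsum, hz1b,
    le_trans hz2b (by nlinarith), hz3b, le_trans hz4b (by nlinarith)⟩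

set_option maxHeartbeats 1600000 in
private lemma key_step (R : Set ℂ) (c : ℂ → Fin 2)
    (hproper : ∀ p ∈ R, ∀ q ∈ R, ‖p - q‖ = 1 → c p ≠ c q)
    (a b p' : ℂ) (ε : ℝ) (hε : 0 < ε)
    (hab : ‖b - a‖ = 1) (ha : Metric.ball a ε ⊆ R) (hb : Metric.ball b ε ⊆ R)
    (h1 : ‖p' - a‖ ≤ ε^2/100) (h2 : ‖p' - a‖ ≤ ε/25) (h3 : ‖p' - a‖ ≤ 1/2) :
    c a = c p' := by
  set u := b - a with hudef
  set w := (p' - a) * (starRingEnd ℂ u) with hwdef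
  have hu : ‖u‖ = 1 := hab
  have hw : ‖w‖ = ‖p' - a‖ := by
    rw [hwdef, norm_mul, RCLike.norm_conj, hu, mul_one]
  obtain ⟨z1, z2, z3, z4, n1, n2, n3, n4, hsum, b1, b2, b3, b4⟩ :=
    four_units w (by rw [hw]; exact h3)
  set t := ‖p' - a‖ with htdef
  have ht0 : 0 ≤ t := norm_nonneg _
  -- numeric bound
  have hbd : Real.sqrt (2*‖w‖) + 2*‖w‖ ≤ ε/7 + 2*ε/25 := by
    have hs : Real.sqrt (2*‖w‖) ≤ ε/7 := by
      rw [show ε/7 = Real.sqrt ((ε/7)^2) by rw [Real.sqrt_sq (by positivity)]]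
      apply Real.sqrt_le_sqrt
      rw [hw]; nlinarith
    rw [hw] at hs ⊢; linarith
  have hbd' : Real.sqrt (2*‖w‖) + 2*‖w‖ < ε/3 := by
    have : ε/7 + 2*ε/25 < ε/3 := by linarith
    linarith
  -- chain points
  set q1 := a + u * z1 with hq1def
  set r := a + u * (z1 - z2) with hrdef
  set q2 := a + u * (z1 - z2 + z3) with hq2def
  have hbeq : b = a + u := by rw [hudef]; ring
  have huw : u * w = p' - a := by
    rw [hwdef]
    have : u * ((p' - a) * (starRingEnd ℂ) u) = (p' - a) * (u * (starRingEnd ℂ) u) := by ring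
    rw [this, Complex.mul_conj]
    have : Complex.normSq u = 1 := by
      have := hu
      rw [← Complex.sq_norm, this]; norm_num
    rw [this]; simp
  have hp'eq : q2 - u * z4 = p' := by
    have : q2 - u * z4 = a + u * (z1 - z2 + z3 - z4) := by rw [hq2def]; ring
    rw [this, hsum, huw]; ring
  -- memberships
  have hmul : ∀ z : ℂ, ‖u * z‖ = ‖z‖ := fun z => by rw [norm_mul, hu, one_mul]
  have haR : a ∈ R := ha (Metric.mem_ball_self hε)
  have hp'R : p' ∈ R := ha (by
    rw [Metric.mem_ball, dist_eq_norm]; calc ‖p' - a‖ ≤ ε/25 := h2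
                                          _ < ε := by linarith)
  have hq1R : q1 ∈ R := hb (by
    rw [Metric.mem_ball, dist_eq_norm]
    have : q1 - b = u * (z1 - 1) := by rw [hq1def, hbeq]; ring
    rw [this, hmul]
    calc ‖z1 - 1‖ ≤ Real.sqrt (2*‖w‖) + 2*‖w‖ := b1
      _ < ε/3 := hbd'
      _ < ε := by linarith)
  have hrR : r ∈ R := ha (by
    rw [Metric.mem_ball, dist_eq_norm]
    have : r - a = u * ((z1 - 1) - (z2 - 1)) := by rw [hrdef]; ring
    rw [this, hmul]
    calc ‖(z1 - 1) - (z2 - 1)‖ ≤ ‖z1 - 1‖ + ‖z2 - 1‖ := norm_sub_le _ _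
      _ < ε/3 + ε/3 := by linarith
      _ < ε := by linarith)
  have hq2R : q2 ∈ R := hb (by
    rw [Metric.mem_ball, dist_eq_norm]
    have : q2 - b = u * ((z1 - 1) - (z2 - 1) + (z3 - 1)) := by rw [hq2def, hbeq]; ring
    rw [this, hmul]
    calc ‖(z1 - 1) - (z2 - 1) + (z3 - 1)‖ ≤ ‖(z1 - 1) - (z2 - 1)‖ + ‖z3 - 1‖ := norm_add_le _ _
      _ ≤ ‖z1 - 1‖ + ‖z2 - 1‖ + ‖z3 - 1‖ := by
          have := norm_sub_le (z1 - 1) (z2 - 1); linarith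
      _ < ε/3 + ε/3 + ε/3 := by linarith
      _ ≤ ε := by linarith)
  -- distances
  have d1 : ‖a - q1‖ = 1 := by
    have : a - q1 = -(u * z1) := by rw [hq1def]; ring
    rw [this, norm_neg, hmul, n1]
  have d2 : ‖q1 - r‖ = 1 := by
    have : q1 - r = u * z2 := by rw [hq1def, hrdef]; ring
    rw [this, hmul, n2]
  have d3 : ‖r - q2‖ = 1 := by
    have : r - q2 = -(u * z3) := by rw [hrdef, hq2def]; ring
    rw [this, norm_neg, hmul, n3]
  have d4 : ‖q2 - p'‖ = 1 := by
    have : q2 - p' = u * z4 := by rw [← hp'eq]; ring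
    rw [this, hmul, n4]
  have e1 : c a ≠ c q1 := hproper a haR q1 hq1R d1
  have e2 : c q1 ≠ c r := hproper q1 hq1R r hrR d2
  have e3 : c r ≠ c q2 := hproper r hrR q2 hq2R d3
  have e4 : c q2 ≠ c p' := hproper q2 hq2R p' hp'R d4
  exact (fin2_trans _ _ _ e1 e2).trans (fin2_trans _ _ _ e3 e4)

theorem rod_lemma (R : Set ℂ) (c : ℂ → Fin 2)
    (hproper : ∀ p ∈ R, ∀ q ∈ R, ‖p - q‖ = 1 → c p ≠ c q)
    (γ δ : ℝ → ℂ)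
    (hγ : ContinuousOn γ (Set.Icc 0 1)) (hδ : ContinuousOn δ (Set.Icc 0 1))
    (hγR : ∀ t ∈ Set.Icc (0 : ℝ) 1, γ t ∈ interior R)
    (hδR : ∀ t ∈ Set.Icc (0 : ℝ) 1, δ t ∈ interior R)
    (hrod : ∀ t ∈ Set.Icc (0 : ℝ) 1, ‖γ t - δ t‖ = 1) :
    c (γ 0) = c (γ 1) := by
  haveI : PreconnectedSpace (Set.Icc (0:ℝ) 1) :=
    Subtype.preconnectedSpace isPreconnected_Icc
  set f : (Set.Icc (0:ℝ) 1) → Fin 2 := fun t => c (γ t) with hfdef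
  have hf : IsLocallyConstant f := by
    rw [IsLocallyConstant.iff_eventually_eq]
    intro x
    obtain ⟨ε1, hε1, hball1⟩ := Metric.isOpen_iff.mp isOpen_interior _ (hγR x x.2)
    obtain ⟨ε2, hε2, hball2⟩ := Metric.isOpen_iff.mp isOpen_interior _ (hδR x x.2)
    set ε := min ε1 ε2 with hεdef
    have hεpos : 0 < ε := lt_min hε1 hε2
    have hba : Metric.ball (γ x) ε ⊆ R :=
      fun z hz => interior_subset (hball1 (Metric.ball_subset_ball (min_le_left _ _) hz))
    have hbb : Metric.ball (δ x) ε ⊆ R :=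
      fun z hz => interior_subset (hball2 (Metric.ball_subset_ball (min_le_right _ _) hz))
    set m := min (ε^2/100) (min (ε/25) (1/2)) with hmdef
    have hmpos : 0 < m := by
      apply lt_min (by positivity) (lt_min (by positivity) (by norm_num))
    have hcont : Continuous ((Set.Icc (0:ℝ) 1).restrict γ) :=
      hγ.restrict
    have hev : (Set.Icc (0:ℝ) 1).restrict γ ⁻¹' Metric.closedBall (γ (x : ℝ)) m ∈ nhds x :=
      (hcont.tendsto x) (Metric.closedBall_mem_nhds _ hmpos)
    filter_upwards [hev] with y hy
    show c (γ (y : ℝ)) = c (γ (x : ℝ))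
    have hnorm : ‖γ (y : ℝ) - γ (x : ℝ)‖ ≤ m := by
      rw [← dist_eq_norm]; exact Metric.mem_closedBall.mp hy
    have := key_step R c hproper (γ (x : ℝ)) (δ (x : ℝ)) (γ (y : ℝ)) ε hεpos
      (by rw [norm_sub_rev]; exact hrod x x.2) hba hbb
      (le_trans hnorm (min_le_left _ _))
      (le_trans hnorm (le_trans (min_le_right _ _) (min_le_left _ _)))
      (le_trans hnorm (le_trans (min_le_right _ _) (min_le_right _ _)))
    exact this.symm
  exact (hf.apply_eq_of_preconnectedSpace ⟨1, by norm_num⟩ ⟨0, by norm_num⟩).symm
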